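/- Let χ be an uncountable limit cardinal such that there is an infinite cardinal η < χ with cov(τ, κ, κ, 2) < χ for every regular cardinal κ with η < κ < χ and every cardinal τ with κ ≤ τ < χ. Then for every (possibly singular) cardinal ν with η < ν < χ and every cardinal τ with ν ≤ τ < χ, cov(τ, ν, ν, 2) ≤ χ. -/

import Mathlib

open Cardinal

noncomputable section

/-- The covering number `cov(ρ₁, ρ₂, ρ₃, ρ₄)`: least cardinality of `X ⊆ P_{ρ₂}(ρ₁)`
such that every `b ∈ P_{ρ₃}(ρ₁)` is covered by the union of fewer than `ρ₄` members of `X`. -/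
def cov (r1 r2 r3 r4 : Cardinal) : Cardinal :=
  sInf { c | ∃ X : Set (Set r1.out),
    (∀ x ∈ X, #x < r2) ∧
    (∀ b : Set r1.out, #b < r3 → ∃ Q : Set (Set r1.out), Q ⊆ X ∧ #Q < r4 ∧ b ⊆ ⋃₀ Q) ∧
    #X = c }

/-- The meeting number `m(ρ, λ)`. -/
def meet (ρ lam : Cardinal) : Cardinal :=
  sInf { c | ∃ Q : Set (Set lam.out),
    (∀ q ∈ Q, #q = ρ) ∧
    (∀ b : Set lam.out, #b = ρ → ∃ q ∈ Q, #(↥(b ∩ q)) = ρ) ∧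
    #Q = c }

/-- The density number `d(ρ, λ)`. -/
def dens (ρ lam : Cardinal) : Cardinal :=
  sInf { c | ∃ Q : Set (Set lam.out),
    (∀ q ∈ Q, #q = ρ) ∧
    (∀ b : Set lam.out, #b = ρ → ∃ q ∈ Q, q ⊆ b) ∧
    #Q = c }

/-- `ds(f)` for `f : λ → ρ`. -/
def ds (ρ lam : Cardinal) (f : lam.out → ρ.out) : Cardinal :=
  sInf { c | ∃ Z : Set (Set lam.out),
    (∀ z ∈ Z, #z = ρ) ∧
    (∀ B : Set lam.out, (∀ α : ρ.out, #(↥(B ∩ f ⁻¹' {α})) = lam) →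
      ∃ z ∈ Z, #(↥(f '' (z ∩ B))) = ρ) ∧
    #Z = c }

/-- The Džamonja–Shelah number `DS(ρ, λ) = sup { ds(f) : f : λ → ρ }`. -/
def DS (ρ lam : Cardinal) : Cardinal := ⨆ f : lam.out → ρ.out, ds ρ lam f

/-- Cofinality of a cardinal. -/
def cf (c : Cardinal) : Cardinal := c.ord.cof

/-- `u(σ, λ) = cov(λ, σ, σ, ω)`. -/
def u (σ lam : Cardinal) : Cardinal := cov lam σ σ ℵ₀

/-- The `o`-th iterated cardinal successor of `c`. -/
def succIter (c : Cardinal) (o : Ordinal) : Cardinal :=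
  Cardinal.preAleph (Cardinal.preAleph.symm c + o)


lemma cov_set_nonempty (r1 r2 r4 : Cardinal) (h4 : (1 : Cardinal) < r4) :
    { c | ∃ X : Set (Set r1.out),
      (∀ x ∈ X, #x < r2) ∧
      (∀ b : Set r1.out, #b < r2 → ∃ Q : Set (Set r1.out), Q ⊆ X ∧ #Q < r4 ∧ b ⊆ ⋃₀ Q) ∧
      #X = c }.Nonempty :=
  ⟨_, {x : Set r1.out | #x < r2}, fun x hx => hx,
    fun b hb => ⟨{b}, by simpa using hb, by simpa using h4, by simp⟩, rfl⟩

theorem stmt17 (χ : Cardinal) (hχ : ℵ₁ ≤ χ)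
    (hlim : ∀ c : Cardinal, c < χ → Order.succ c < χ)
    (η : Cardinal) (hη : ℵ₀ ≤ η) (hηχ : η < χ)
    (h : ∀ κ τ : Cardinal, cf κ = κ → η < κ → κ < χ → κ ≤ τ → τ < χ → cov τ κ κ 2 < χ) :
    ∀ ν τ : Cardinal, η < ν → ν < χ → ν ≤ τ → τ < χ → cov τ ν ν 2 ≤ χ := by
  intro ν τ hην hνχ hντ hτχ
  have hℵ₀χ : ℵ₀ ≤ χ := aleph0_lt_aleph_one.le.trans hχ
  haveI : IsWellOrder ν.ord.ToType (· < ·) := isWellOrder_lt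
  haveI : Nonempty ν.ord.ToType := by
    rw [Ordinal.nonempty_toType_iff, ne_eq, Cardinal.ord_eq_zero]
    rintro rfl
    exact (Cardinal.zero_le η).not_gt hην
  set κ : ν.ord.ToType → Cardinal := fun i => Order.succ (max η #(Set.Iio i)) with hκdef
  have hκν : ∀ i, κ i ≤ ν := fun i =>
    Order.succ_le_of_lt (max_lt hην (Cardinal.mk_Iio_ord_toType i))
  have hκreg : ∀ i, cf (κ i) = κ i := fun i =>
    (Cardinal.isRegular_succ (hη.trans (le_max_left _ _))).cof_eq
  have hκη : ∀ i, η < κ i := fun i =>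
    (le_max_left _ _).trans_lt (Order.lt_succ _)
  have hcov : ∀ i, cov τ (κ i) (κ i) 2 < χ := fun i =>
    h (κ i) τ (hκreg i) (hκη i) ((hκν i).trans_lt hνχ) ((hκν i).trans hντ) hτχ
  have hwit : ∀ i : ν.ord.ToType, cov τ (κ i) (κ i) 2 ∈
      { c | ∃ X : Set (Set τ.out),
        (∀ x ∈ X, #x < κ i) ∧
        (∀ b : Set τ.out, #b < κ i → ∃ Q : Set (Set τ.out), Q ⊆ X ∧ #Q < 2 ∧ b ⊆ ⋃₀ Q) ∧
        #X = c } := fun i => csInf_mem (cov_set_nonempty τ (κ i) 2 one_lt_two)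
  choose X hX1 hX2 hX3 using hwit
  refine le_trans (csInf_le' ⟨⋃ i, X i, ?_, ?_, rfl⟩) ?_
  · rintro x hx
    obtain ⟨i, hi⟩ := Set.mem_iUnion.1 hx
    exact (hX1 i x hi).trans_le (hκν i)
  · intro b hb
    have hc : max η #b < ν := max_lt hην hb
    have hlt : (η ⊔ #b).ord < Ordinal.type (α := ν.ord.ToType) (· < ·) := by
      rw [Ordinal.type_toType]; exact Cardinal.ord_lt_ord.2 hc
    obtain ⟨i, hi⟩ := Ordinal.typein_surj _ hlt
    have hIio : #(Set.Iio i) = max η #b := by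
      have := congrArg Ordinal.card hi
      rw [Cardinal.card_ord] at this; rw [← this]; rfl
    have hbκ : #b < κ i := by
      have hk : κ i = Order.succ (η ⊔ #b) := by simp only [hκdef, hIio, ← sup_assoc, sup_idem]
      rw [hk]
      exact (le_max_right η _).trans_lt (Order.lt_succ _)
    obtain ⟨Q, hQX, hQ2, hQb⟩ := hX2 i b hbκ
    exact ⟨Q, hQX.trans (Set.subset_iUnion X i), hQ2, hQb⟩
  · calc #(⋃ i, X i) ≤ #ν.ord.ToType * ⨆ i, #(X i) := Cardinal.mk_iUnion_le X
      _ ≤ χ * χ := by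
          apply mul_le_mul'
          · rw [Cardinal.mk_ord_toType]; exact hνχ.le
          · exact ciSup_le fun i => (hX3 i).le.trans (hcov i).le
      _ = χ := Cardinal.mul_eq_self hℵ₀χ
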